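/- There exists λ > 0 such that for every finite sequence k₁,...,k_N ∈ {1,...,12}, every entry of the matrix product B_{k₁}⋯B_{k_N} − (any fixed product structure) grows at most linearly: ‖B_{k₁}⋯B_{k_N}‖ ≤ λ·N for all N ≥ 1 (in any fixed matrix norm). -/

import Mathlib

/-- The twelve `6×6` matrices `B_n` of the paper (acting on row vectors on the right),
in the log-coordinates `v = (log r_FA, log r_AR, log r_RM, log r_FR, log r_AM, log r_FM)`. -/
def B : Fin 12 → Matrix (Fin 6) (Fin 6) ℝ :=
  ![!![0,0,0,0,0,0; -1,1,0,0,0,0; 0,0,1,0,0,0; 1,0,0,1,0,0; 0,0,0,0,1,0; 0,0,0,0,0,1],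
    !![0,0,0,0,0,0; 0,1,0,0,0,0; 0,0,1,0,0,0; 0,0,0,1,0,0; -1,0,0,0,1,0; 1,0,0,0,0,1],
    !![1,0,0,1,0,0; 0,1,0,1,0,0; 0,0,1,0,0,0; 0,0,0,0,0,0; 0,0,0,0,1,0; 0,0,0,0,0,1],
    !![1,0,0,0,0,0; 0,1,0,0,0,0; 0,0,1,-1,0,0; 0,0,0,0,0,0; 0,0,0,0,1,0; 0,0,0,1,0,1],
    !![1,0,0,0,0,1; 0,1,0,0,0,0; 0,0,1,0,0,0; 0,0,0,1,0,0; 0,0,0,0,1,1; 0,0,0,0,0,0],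
    !![1,0,0,0,0,0; 0,1,0,0,0,0; 0,0,1,0,0,1; 0,0,0,1,0,1; 0,0,0,0,1,0; 0,0,0,0,0,0],
    !![1,-1,0,0,0,0; 0,0,0,0,0,0; 0,0,1,0,0,0; 0,1,0,1,0,0; 0,0,0,0,1,0; 0,0,0,0,0,1],
    !![1,0,0,0,0,0; 0,0,0,0,0,0; 0,-1,1,0,0,0; 0,0,0,1,0,0; 0,1,0,0,1,0; 0,0,0,0,0,1],
    !![1,0,0,0,-1,0; 0,1,0,0,0,0; 0,0,1,0,0,0; 0,0,0,1,0,0; 0,0,0,0,0,0; 0,0,0,0,1,1],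
    !![1,0,0,0,0,0; 0,1,0,0,1,0; 0,0,1,0,1,0; 0,0,0,1,0,0; 0,0,0,0,0,0; 0,0,0,0,0,1],
    !![1,0,0,0,0,0; 0,1,0,0,0,0; 0,0,0,0,0,0; 0,0,-1,1,0,0; 0,0,0,0,1,0; 0,0,1,0,0,1],
    !![1,0,0,0,0,0; 0,1,-1,0,0,0; 0,0,0,0,0,0; 0,0,0,1,0,0; 0,0,1,0,1,0; 0,0,0,0,0,1]]

def Wz : Matrix (Fin 6) (Fin 3) ℤ :=
  !![-1,0,0; -1,1,0; 0,0,-1; 1,-1,-1; 0,-1,0; 0,1,1]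

def Bz : Fin 12 → Matrix (Fin 6) (Fin 6) ℤ :=
  ![!![0,0,0,0,0,0; -1,1,0,0,0,0; 0,0,1,0,0,0; 1,0,0,1,0,0; 0,0,0,0,1,0; 0,0,0,0,0,1],
    !![0,0,0,0,0,0; 0,1,0,0,0,0; 0,0,1,0,0,0; 0,0,0,1,0,0; -1,0,0,0,1,0; 1,0,0,0,0,1],
    !![1,0,0,1,0,0; 0,1,0,1,0,0; 0,0,1,0,0,0; 0,0,0,0,0,0; 0,0,0,0,1,0; 0,0,0,0,0,1],
    !![1,0,0,0,0,0; 0,1,0,0,0,0; 0,0,1,-1,0,0; 0,0,0,0,0,0; 0,0,0,0,1,0; 0,0,0,1,0,1],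
    !![1,0,0,0,0,1; 0,1,0,0,0,0; 0,0,1,0,0,0; 0,0,0,1,0,0; 0,0,0,0,1,1; 0,0,0,0,0,0],
    !![1,0,0,0,0,0; 0,1,0,0,0,0; 0,0,1,0,0,1; 0,0,0,1,0,1; 0,0,0,0,1,0; 0,0,0,0,0,0],
    !![1,-1,0,0,0,0; 0,0,0,0,0,0; 0,0,1,0,0,0; 0,1,0,1,0,0; 0,0,0,0,1,0; 0,0,0,0,0,1],
    !![1,0,0,0,0,0; 0,0,0,0,0,0; 0,-1,1,0,0,0; 0,0,0,1,0,0; 0,1,0,0,1,0; 0,0,0,0,0,1],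
    !![1,0,0,0,-1,0; 0,1,0,0,0,0; 0,0,1,0,0,0; 0,0,0,1,0,0; 0,0,0,0,0,0; 0,0,0,0,1,1],
    !![1,0,0,0,0,0; 0,1,0,0,1,0; 0,0,1,0,1,0; 0,0,0,1,0,0; 0,0,0,0,0,0; 0,0,0,0,0,1],
    !![1,0,0,0,0,0; 0,1,0,0,0,0; 0,0,0,0,0,0; 0,0,-1,1,0,0; 0,0,0,0,1,0; 0,0,1,0,0,1],
    !![1,0,0,0,0,0; 0,1,-1,0,0,0; 0,0,0,0,0,0; 0,0,0,1,0,0; 0,0,1,0,1,0; 0,0,0,0,0,1]]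

def Fz : Fin 12 → Matrix (Fin 3) (Fin 6) ℤ :=
  ![!![1,0,0,0,0,0; 0,0,0,0,0,0; 0,0,0,0,0,0],
    !![1,0,0,0,0,0; 1,0,0,0,0,0; 0,0,0,0,0,0],
    !![0,0,0,-1,0,0; 0,0,0,0,0,0; 0,0,0,0,0,0],
    !![0,0,0,0,0,0; 0,0,0,0,0,0; 0,0,0,1,0,0],
    !![0,0,0,0,0,-1; 0,0,0,0,0,-1; 0,0,0,0,0,0],
    !![0,0,0,0,0,0; 0,0,0,0,0,0; 0,0,0,0,0,-1],
    !![0,1,0,0,0,0; 0,0,0,0,0,0; 0,0,0,0,0,0],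
    !![0,0,0,0,0,0; 0,-1,0,0,0,0; 0,1,0,0,0,0],
    !![0,0,0,0,1,0; 0,0,0,0,1,0; 0,0,0,0,0,0],
    !![0,0,0,0,0,0; 0,0,0,0,1,0; 0,0,0,0,-1,0],
    !![0,0,0,0,0,0; 0,0,0,0,0,0; 0,0,1,0,0,0],
    !![0,0,0,0,0,0; 0,0,-1,0,0,0; 0,0,1,0,0,0]]

def Gz : Fin 12 → Matrix (Fin 3) (Fin 3) ℤ :=
  ![!![0,0,0; 0,1,0; 0,0,1],
    !![0,0,0; -1,1,0; 0,0,1],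
    !![0,1,1; 0,1,0; 0,0,1],
    !![1,0,0; 0,1,0; 1,-1,0],
    !![1,-1,-1; 0,0,-1; 0,0,1],
    !![1,0,0; 0,1,0; 0,-1,0],
    !![0,1,0; 0,1,0; 0,0,1],
    !![1,0,0; 1,0,0; -1,1,1],
    !![1,-1,0; 0,0,0; 0,0,1],
    !![1,0,0; 0,0,0; 0,1,1],
    !![1,0,0; 0,1,0; 0,0,0],
    !![1,0,0; 0,1,1; 0,0,0]]

def Rl : List (Fin 3 → ℤ) :=
  [![-1,0,0], ![-1,1,0], ![-1,1,1], ![0,-1,-1], ![0,-1,0], ![0,0,-1], ![0,0,0], ![0,0,1], ![0,1,0], ![0,1,1], ![1,-1,-1], ![1,-1,0], ![1,0,0]]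


def cR : ℤ →+* ℝ := Int.castRingHom ℝ

lemma Bz_eq : ∀ n, Bz n = 1 + Wz * Fz n := by decide

lemma BzWz : ∀ n, Bz n * Wz = Wz * Gz n := by decide

lemma good_step : ∀ r ∈ Rl, ∀ n : Fin 12,
    (fun j => Finset.univ.sum (fun k => r k * Gz n k j)) ∈ Rl := by decide

lemma Rl_bound : ∀ r ∈ Rl, ∀ j, |r j| ≤ 1 := by decide

lemma Fz_bound : ∀ n i j, |Fz n i j| ≤ 1 := by decide

lemma Wz_bound : ∀ i j, |Wz i j| ≤ 1 := by decide

set_option maxHeartbeats 2000000 in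
lemma B_cast : ∀ n, B n = (Bz n).map cR := by
  intro n
  fin_cases n <;> (ext i j; fin_cases i <;> fin_cases j <;>
    simp only [B, Bz, cR, Int.castRingHom, Matrix.map_apply, Matrix.cons_val',
      Matrix.cons_val_zero, Matrix.cons_val_one, Matrix.head_cons, Matrix.empty_val',
      Matrix.cons_val_fin_one, Matrix.head_fin_const, Matrix.cons_val_two,
      Matrix.cons_val_three, Matrix.tail_cons] <;> norm_num)

noncomputable def Wr : Matrix (Fin 6) (Fin 3) ℝ := Wz.map cR
noncomputable def Fr (n : Fin 12) : Matrix (Fin 3) (Fin 6) ℝ := (Fz n).map cR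

lemma castAbs {a : ℤ} (h : |a| ≤ 1) : |(cR a : ℝ)| ≤ 1 := by
  show |((a : ℤ) : ℝ)| ≤ 1
  rw [← Int.cast_abs]
  exact_mod_cast h

lemma B_eq (n : Fin 12) : B n = 1 + Wr * Fr n := by
  rw [B_cast, Bz_eq n, Matrix.map_add _ (map_add cR), Matrix.map_mul,
    Matrix.map_one _ (map_zero cR) (map_one cR)]
  rfl

lemma BW (n : Fin 12) : B n * Wr = Wr * (Gz n).map cR := by
  rw [B_cast, Wr, ← Matrix.map_mul, BzWz n, Matrix.map_mul]

lemma prodW : ∀ L : List (Fin 12),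
    (L.map B).prod * Wr = Wr * ((L.map Gz).prod).map cR := by
  intro L
  induction L with
  | nil =>
    simp [Matrix.map_one _ (map_zero cR) (map_one cR), Matrix.one_mul, Matrix.mul_one]
  | cons a l ih =>
    rw [List.map_cons, List.prod_cons, List.map_cons, List.prod_cons, Matrix.mul_assoc, ih,
      ← Matrix.mul_assoc, BW, Matrix.mul_assoc, ← Matrix.map_mul]

abbrev good (M : Matrix (Fin 3) (Fin 3) ℤ) : Prop := ∀ i, M i ∈ Rl

lemma good_one : good 1 := by show ∀ i, (fun j => (1 : Matrix (Fin 3) (Fin 3) ℤ) i j) ∈ Rl; decide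

lemma good_mul {M : Matrix (Fin 3) (Fin 3) ℤ} (h : good M) (n : Fin 12) :
    good (M * Gz n) := by
  intro i
  have hrow : (M * Gz n) i = fun j => Finset.univ.sum (fun k => M i k * Gz n k j) := by
    ext j; simp [Matrix.mul_apply]
  rw [hrow]
  exact good_step (M i) (h i) n

lemma goodProd : ∀ L : List (Fin 12), good ((L.map Gz).prod) := by
  intro L
  induction L using List.reverseRecOn with
  | nil => simpa using good_one
  | append_singleton l a ih =>
    rw [List.map_append, List.prod_append, List.map_singleton, List.prod_singleton]
    exact good_mul ih a

lemma abs3 (f : Fin 3 → ℝ) (c : ℝ) (h : ∀ k, |f k| ≤ c) :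
    |Finset.univ.sum f| ≤ 3 * c := by
  rw [Fin.sum_univ_three]
  have h0 := h 0; have h1 := h 1; have h2 := h 2
  calc |f 0 + f 1 + f 2| ≤ |f 0 + f 1| + |f 2| := abs_add_le _ _
    _ ≤ |f 0| + |f 1| + |f 2| := by have := abs_add_le (f 0) (f 1); linarith
    _ ≤ 3 * c := by linarith

lemma main : ∀ L : List (Fin 12), ∃ X : Matrix (Fin 3) (Fin 6) ℝ,
    (L.map B).prod = 1 + Wr * X ∧ ∀ i j, |X i j| ≤ 3 * L.length := by
  intro L
  induction L using List.reverseRecOn with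
  | nil => exact ⟨0, by simp, by simp⟩
  | append_singleton l a ih =>
    obtain ⟨X, hX, hb⟩ := ih
    set Hc : Matrix (Fin 3) (Fin 3) ℝ := ((l.map Gz).prod).map cR with hHc
    have hHb : ∀ i k, |Hc i k| ≤ 1 := fun i k =>
      castAbs (Rl_bound _ (goodProd l i) k)
    refine ⟨X + Hc * Fr a, ?_, ?_⟩
    · rw [List.map_append, List.prod_append, List.map_singleton, List.prod_singleton]
      calc (l.map B).prod * B a
          = (l.map B).prod * 1 + (l.map B).prod * Wr * Fr a := by
            rw [B_eq a, Matrix.mul_add, Matrix.mul_assoc]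
        _ = (1 + Wr * X) + Wr * Hc * Fr a := by rw [Matrix.mul_one, prodW, hX, hHc]
        _ = 1 + Wr * (X + Hc * Fr a) := by
            rw [Matrix.mul_add, ← Matrix.mul_assoc Wr, add_assoc]
    · intro i j
      have hterm : |(Hc * Fr a) i j| ≤ 3 * 1 := by
        rw [Matrix.mul_apply]
        refine abs3 _ 1 (fun k => ?_)
        calc |Hc i k * Fr a k j| = |Hc i k| * |Fr a k j| := abs_mul _ _
          _ ≤ 1 * 1 :=
            mul_le_mul (hHb i k) (castAbs (Fz_bound a k j)) (abs_nonneg _) zero_le_one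
          _ = 1 := mul_one 1
      have hXb := hb i j
      have habs : |(X + Hc * Fr a) i j| ≤ |X i j| + |(Hc * Fr a) i j| := by
        rw [Matrix.add_apply]; exact abs_add_le _ _
      have hlen : ((l ++ [a]).length : ℝ) = (l.length : ℝ) + 1 := by
        simp
      rw [hlen]
      linarith

theorem B_products_grow_at_most_linearly :
    ∃ lam : ℝ, 0 < lam ∧ ∀ L : List (Fin 12), 1 ≤ L.length →
      ∀ i j : Fin 6, |((L.map B).prod) i j| ≤ lam * L.length := by
  refine ⟨10, by norm_num, ?_⟩
  intro L hL i j
  obtain ⟨X, hX, hb⟩ := main L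
  have hN : (1 : ℝ) ≤ (L.length : ℝ) := by exact_mod_cast hL
  rw [hX]
  have hW : ∀ i k, |Wr i k| ≤ 1 := fun i k => castAbs (Wz_bound i k)
  have hsum : |(Wr * X) i j| ≤ 3 * (3 * L.length) := by
    rw [Matrix.mul_apply]
    refine abs3 _ (3 * L.length) (fun k => ?_)
    calc |Wr i k * X k j| = |Wr i k| * |X k j| := abs_mul _ _
      _ ≤ 1 * (3 * L.length) :=
        mul_le_mul (hW i k) (hb k j) (abs_nonneg _) zero_le_one
      _ = 3 * L.length := one_mul _
  have hone : |(1 : Matrix (Fin 6) (Fin 6) ℝ) i j| ≤ 1 := by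
    rw [Matrix.one_apply]
    split <;> simp
  have : |((1 : Matrix (Fin 6) (Fin 6) ℝ) + Wr * X) i j|
      ≤ |(1 : Matrix (Fin 6) (Fin 6) ℝ) i j| + |(Wr * X) i j| := by
    rw [Matrix.add_apply]; exact abs_add_le _ _
  linarith
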